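/- Assume a codeword C of a constant-dimension code in the Grassmannian E_r(q,n) with minimum subspace distance 2d is sent, and the received subspace V has dimension v and satisfies d_S(C,V) = d+1 with d−1+v−r even (so ensuring N_S(r,v,d+1) > 0). Then the probability that V lies within subspace distance d−1 of some other codeword, given that all such V are equiprobable, equals q^{−(d−τ)(τ+1)} · ([d choose τ]_q [d choose τ+1]_q)/([r choose d−τ]_q [n−r choose τ+1]_q) · A_d(C), where τ = (d−1+v−r)/2 and A_d(C) is the number of codewords at subspace distance exactly 2d from C. -/
import Mathlib
set_option synthInstance.maxHeartbeats 1000000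
set_option maxHeartbeats 1000000


/-- `galpha q m u = ∏_{i=0}^{u-1} (q^m - q^i)`. -/
def galpha (q m u : ℕ) : ℕ := ∏ i ∈ Finset.range u, (q ^ m - q ^ i)

/-- The Gaussian binomial coefficient `[n choose r]_q = α(n,r)/α(r,r)`. -/
def gauss (q n r : ℕ) : ℕ := galpha q n r / galpha q r r

/-- The subspace distance `d_S(U,V) = dim(U+V) - dim(U∩V)`. -/
noncomputable def dS {F : Type} [Field F] {n : ℕ} (U V : Submodule F (Fin n → F)) : ℕ :=
  Module.finrank F ↥(U ⊔ V) - Module.finrank F ↥(U ⊓ V)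

open Module Submodule Set

lemma galpha_pos {q : ℕ} (hq : 2 ≤ q) (u : ℕ) : 0 < galpha q u u := by
  apply Finset.prod_pos
  intro i hi
  simp only [Finset.mem_range] at hi
  have : q ^ i < q ^ u := Nat.pow_lt_pow_right (by omega) hi
  omega

lemma galpha_eq_zero {q m u : ℕ} (hq : 2 ≤ q) (h : m < u) : galpha q m u = 0 := by
  apply Finset.prod_eq_zero (Finset.mem_range.2 h)
  simp

section Count

variable {F : Type} [Field F] [Fintype F] {M : Type} [AddCommGroup M] [Module F M]
  [FiniteDimensional F M]

lemma range_snoc {k : ℕ} (g : Fin k → M) (x : M) :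
    Set.range (Fin.snoc g x) = insert x (Set.range g) := by
  ext y
  constructor
  · rintro ⟨i, rfl⟩
    refine Fin.lastCases ?_ ?_ i
    · simp
    · intro j; right; exact ⟨j, by simp⟩
  · rintro (rfl | ⟨i, rfl⟩)
    · exact ⟨Fin.last k, by simp⟩
    · exact ⟨i.castSucc, by simp⟩

/-- key step equivalence for the snoc induction -/
lemma snoc_li_iff {k : ℕ} (T : Submodule F M) (g : Fin k → M) (x : M) :
    (LinearIndependent F (Fin.snoc g x : Fin (k+1) → M) ∧
      Disjoint (span F (Set.range (Fin.snoc g x : Fin (k+1) → M))) T) ↔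
    ((LinearIndependent F g ∧ Disjoint (span F (Set.range g)) T) ∧
      x ∉ span F (Set.range g) ⊔ T) := by
  rw [range_snoc, linearIndependent_fin_snoc]
  constructor
  · rintro ⟨⟨hg, hx⟩, hdisj⟩
    have hdisj' : Disjoint (span F (Set.range g)) T :=
      hdisj.mono_left (span_mono (Set.subset_insert _ _))
    refine ⟨⟨hg, hdisj'⟩, ?_⟩
    intro hmem
    rw [Submodule.mem_sup] at hmem
    obtain ⟨s, hs, t, ht, rfl⟩ := hmem
    have hxs : s + t ∈ span F (insert (s + t) (Set.range g)) :=
      subset_span (Set.mem_insert _ _)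
    have hss : s ∈ span F (insert (s + t) (Set.range g)) :=
      span_mono (Set.subset_insert _ _) hs
    have htm : t ∈ span F (insert (s + t) (Set.range g)) := by
      have := sub_mem hxs hss; simpa using this
    have ht0 : t = 0 := by
      have : t ∈ span F (insert (s + t) (Set.range g)) ⊓ T := ⟨htm, ht⟩
      rw [disjoint_iff.1 hdisj] at this
      simpa using this
    subst ht0
    simp only [add_zero] at hx
    exact hx hs
  · rintro ⟨⟨hg, hdisj⟩, hx⟩
    have hxs : x ∉ span F (Set.range g) := fun h => hx (Submodule.mem_sup_left h)
    refine ⟨⟨hg, hxs⟩, ?_⟩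
    rw [disjoint_iff, eq_bot_iff]
    intro y hy
    rw [Submodule.mem_inf] at hy
    obtain ⟨hy1, hy2⟩ := hy
    rw [span_insert, Submodule.mem_sup] at hy1
    obtain ⟨z, hz, s, hs, rfl⟩ := hy1
    rw [Submodule.mem_span_singleton] at hz
    obtain ⟨c, rfl⟩ := hz
    by_cases hc : c = 0
    · subst hc
      simp only [zero_smul, zero_add] at *
      have : s ∈ span F (Set.range g) ⊓ T := ⟨hs, hy2⟩
      rwa [disjoint_iff.1 hdisj] at this
    · exfalso
      apply hx
      have : x = c⁻¹ • ((c • x + s) - s) := by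
        rw [add_sub_cancel_right, smul_smul, inv_mul_cancel₀ hc, one_smul]
      rw [this]
      refine Submodule.smul_mem _ _ (sub_mem ?_ ?_)
      · exact Submodule.mem_sup_right hy2
      · exact Submodule.mem_sup_left hs

lemma card_notmem_submodule (W : Submodule F M) :
    Nat.card {x : M // x ∉ W} =
      Fintype.card F ^ finrank F M - Fintype.card F ^ finrank F W := by
  have : Finite M := Module.finite_of_finite F
  have hW : Nat.card ↥W = Fintype.card F ^ finrank F W := by
    have := Fintype.ofFinite ↥W
    rw [Nat.card_eq_fintype_card]; exact card_eq_pow_finrank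
  have hM : Nat.card M = Fintype.card F ^ finrank F M := by
    have := Fintype.ofFinite M
    rw [Nat.card_eq_fintype_card]; exact card_eq_pow_finrank
  have hle : Nat.card ↥W ≤ Nat.card M := Nat.card_le_card_of_injective _ Subtype.val_injective
  have key : (W : Set M).ncard + (W : Set M)ᶜ.ncard = Nat.card M :=
    Set.ncard_add_ncard_compl _
  have e1 : Nat.card {x : M // x ∉ W} = ((W : Set M)ᶜ).ncard := by
    rw [← Nat.card_coe_set_eq]
    exact Nat.card_congr (Equiv.subtypeEquivRight (by intro x; simp))
  have e2 : (W : Set M).ncard = Nat.card ↥W := (Nat.card_coe_set_eq _).symm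
  rw [e1, ← hW, ← hM]
  omega

lemma card_sigma_const {ι : Type} [Finite ι] {f : ι → Type} [∀ i, Finite (f i)] {c : ℕ}
    (h : ∀ i, Nat.card (f i) = c) : Nat.card (Σ i, f i) = Nat.card ι * c := by
  classical
  have := Fintype.ofFinite ι
  have : ∀ i, Fintype (f i) := fun i => Fintype.ofFinite _
  rw [Nat.card_eq_fintype_card, Fintype.card_sigma, Nat.card_eq_fintype_card]
  have h' : ∀ i, Fintype.card (f i) = c := fun i => by
    rw [← Nat.card_eq_fintype_card]; exact h i
  simp [h', Finset.sum_const, Finset.card_univ, mul_comm]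

/-- Count of linearly independent `k`-tuples whose span avoids `T`. -/
lemma card_li_tuples_avoiding (T : Submodule F M) (k : ℕ) :
    Nat.card {f : Fin k → M // LinearIndependent F f ∧ Disjoint (span F (Set.range f)) T} =
      ∏ i ∈ Finset.range k,
        (Fintype.card F ^ finrank F M - Fintype.card F ^ (finrank F T + i)) := by
  have : Finite M := Module.finite_of_finite F
  induction k with
  | zero =>
      rw [Finset.range_zero, Finset.prod_empty]
      have hall : ∀ f : Fin 0 → M,
          LinearIndependent F f ∧ Disjoint (span F (Set.range f)) T := by
        intro f
        constructor
        · exact linearIndependent_empty_type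
        · have : Set.range f = ∅ := Set.range_eq_empty f
          rw [this, span_empty]
          exact disjoint_bot_left
      rw [Nat.card_congr (Equiv.subtypeUnivEquiv hall)]
      exact Nat.card_unique
  | succ k ih =>
      rw [Finset.prod_range_succ, ← ih, mul_comm]  -- RHS: const * card; fix below
      have e : {f : Fin (k+1) → M // LinearIndependent F f ∧
            Disjoint (span F (Set.range f)) T} ≃
          Σ g : {g : Fin k → M // LinearIndependent F g ∧
            Disjoint (span F (Set.range g)) T},
            {x : M // x ∉ span F (Set.range g.1) ⊔ T} := by
        refine ⟨fun f => ?_, fun p => ⟨Fin.snoc p.1.1 p.2.1,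
          (snoc_li_iff T p.1.1 p.2.1).2 ⟨p.1.2, p.2.2⟩⟩, ?_, ?_⟩
        · have hf : (Fin.snoc (Fin.init f.1) (f.1 (Fin.last k)) : Fin (k+1) → M) = f.1 :=
            Fin.snoc_init_self f.1
          have h2 := (snoc_li_iff T (Fin.init f.1) (f.1 (Fin.last k))).1 (by rw [hf]; exact f.2)
          exact ⟨⟨Fin.init f.1, h2.1⟩, ⟨f.1 (Fin.last k), h2.2⟩⟩
        · intro f
          ext : 1
          simp [Fin.snoc_init_self]
        · rintro ⟨⟨g, hg⟩, ⟨x, hx⟩⟩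
          have h1 : Fin.init (Fin.snoc g x : Fin (k+1) → M) = g := by
            simp
          have h2 : (Fin.snoc g x : Fin (k+1) → M) (Fin.last k) = x := by
            simp
          exact Sigma.ext (Subtype.ext h1)
            ((Subtype.heq_iff_coe_eq (fun y => by simp)).2 h2)
      rw [Nat.card_congr e, mul_comm]
      refine card_sigma_const ?_
      rintro ⟨g, hg, hdisj⟩
      dsimp only
      rw [card_notmem_submodule]
      have hspan : finrank F ↥(span F (Set.range g)) = k := by
        rw [finrank_span_eq_card hg, Fintype.card_fin]
      have hsum := Submodule.finrank_sup_add_finrank_inf_eq (span F (Set.range g)) T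
      rw [disjoint_iff.1 hdisj] at hsum
      simp only [finrank_bot, add_zero] at hsum
      have hrank : finrank F ↥(span F (Set.range g) ⊔ T) = finrank F ↥T + k := by omega
      rw [hrank]

lemma span_comp_subtype {m : ℕ} (X : Submodule F M) (hX : finrank F X = m)
    {g : Fin m → ↥X} (hg : LinearIndependent F g) :
    span F (Set.range (X.subtype ∘ g)) = X := by
  have htop : span F (Set.range g) = ⊤ :=
    Submodule.eq_top_of_finrank_eq
      (by rw [finrank_span_eq_card hg, Fintype.card_fin, hX])
  rw [Set.range_comp, Submodule.span_image, htop, Submodule.map_top,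
    Submodule.range_subtype]

lemma card_subspace_avoiding_mul (T : Submodule F M) (m : ℕ) :
    Nat.card {X : Submodule F M // finrank F X = m ∧ Disjoint X T} *
        galpha (Fintype.card F) m m =
      ∏ i ∈ Finset.range m,
        (Fintype.card F ^ finrank F M - Fintype.card F ^ (finrank F T + i)) := by
  have hfin : Finite M := Module.finite_of_finite F
  rw [← card_li_tuples_avoiding T m]
  have hsig : Nat.card (Σ X : {X : Submodule F M // finrank F X = m ∧ Disjoint X T},
      {g : Fin m → ↥X.1 // LinearIndependent F g}) =
      Nat.card {X : Submodule F M // finrank F X = m ∧ Disjoint X T} *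
        galpha (Fintype.card F) m m := by
    refine card_sigma_const ?_
    rintro ⟨X, hX, hd⟩
    have e : {g : Fin m → ↥X // LinearIndependent F g} ≃
        {g : Fin m → ↥X // LinearIndependent F g ∧
          Disjoint (span F (Set.range g)) (⊥ : Submodule F ↥X)} :=
      Equiv.subtypeEquivRight (fun g => by simp)
    rw [Nat.card_congr e, card_li_tuples_avoiding (M := ↥X) ⊥ m, galpha]
    apply Finset.prod_congr rfl
    intro i _
    rw [hX, finrank_bot, Nat.zero_add]
  rw [← hsig]
  refine Nat.card_eq_of_bijective
    (fun p => (⟨p.1.1.subtype ∘ p.2.1, by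
      obtain ⟨⟨X, hX, hd⟩, ⟨g, hg⟩⟩ := p
      refine ⟨hg.map' X.subtype (Submodule.ker_subtype X), ?_⟩
      rw [span_comp_subtype X hX hg]
      exact hd⟩ :
      {f : Fin m → M // LinearIndependent F f ∧
        Disjoint (span F (Set.range f)) T})) ⟨?_, ?_⟩
  · rintro ⟨⟨X, hX, hd⟩, ⟨g, hg⟩⟩ ⟨⟨X', hX', hd'⟩, ⟨g', hg'⟩⟩ h
    have hfun : X.subtype ∘ g = X'.subtype ∘ g' := congrArg Subtype.val h
    have hXX : X = X' := by
      rw [← span_comp_subtype X hX hg, ← span_comp_subtype X' hX' hg', hfun]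
    subst hXX
    have hgg : g = g' := by
      funext i
      exact Subtype.ext (congrFun hfun i)
    subst hgg
    rfl
  · rintro ⟨f, hf, hdisj⟩
    have hXr : finrank F ↥(span F (Set.range f)) = m := by
      rw [finrank_span_eq_card hf, Fintype.card_fin]
    refine ⟨⟨⟨span F (Set.range f), hXr, hdisj⟩,
      ⟨fun i => ⟨f i, subset_span (Set.mem_range_self i)⟩, ?_⟩⟩, ?_⟩
    · exact LinearIndependent.of_comp (span F (Set.range f)).subtype hf
    · exact Subtype.ext (funext fun i => rfl)

lemma galpha_eq_card_grassmannian_mul (m : ℕ) :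
    galpha (Fintype.card F) (finrank F M) m =
      Nat.card {X : Submodule F M // finrank F X = m} * galpha (Fintype.card F) m m := by
  have := card_subspace_avoiding_mul (F := F) (M := M) ⊥ m
  rw [show Nat.card {X : Submodule F M // finrank F X = m ∧ Disjoint X ⊥} =
      Nat.card {X : Submodule F M // finrank F X = m} from
    Nat.card_congr (Equiv.subtypeEquivRight (fun X => by simp))] at this
  rw [this, galpha]
  apply Finset.prod_congr rfl
  intro i _
  rw [finrank_bot, Nat.zero_add]

lemma card_grassmannian (m : ℕ) :
    Nat.card {X : Submodule F M // finrank F X = m} =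
      gauss (Fintype.card F) (finrank F M) m := by
  have hq : 2 ≤ Fintype.card F := Fintype.one_lt_card
  rw [gauss, galpha_eq_card_grassmannian_mul (F := F) (M := M) m,
    Nat.mul_div_cancel _ (galpha_pos hq m)]

lemma card_subspace_avoiding (T : Submodule F M) (m : ℕ) :
    Nat.card {X : Submodule F M // finrank F X = m ∧ Disjoint X T} =
      Fintype.card F ^ (finrank F T * m) *
        gauss (Fintype.card F) (finrank F M - finrank F T) m := by
  have hq : 2 ≤ Fintype.card F := Fintype.one_lt_card
  have htN : finrank F T ≤ finrank F M := Submodule.finrank_le T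
  have hquot : finrank F (M ⧸ T) = finrank F M - finrank F T := by
    have := Submodule.finrank_quotient_add_finrank T
    omega
  have key := card_subspace_avoiding_mul (F := F) (M := M) T m
  have hprod : ∏ i ∈ Finset.range m,
      (Fintype.card F ^ finrank F M - Fintype.card F ^ (finrank F T + i)) =
      Fintype.card F ^ (finrank F T * m) *
        galpha (Fintype.card F) (finrank F M - finrank F T) m := by
    have hc : Fintype.card F ^ (finrank F T * m) =
        ∏ _i ∈ Finset.range m, Fintype.card F ^ finrank F T := by
      rw [Finset.prod_const, Finset.card_range, ← pow_mul]
    rw [galpha, hc, ← Finset.prod_mul_distrib]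
    apply Finset.prod_congr rfl
    intro i _
    rw [Nat.mul_sub, ← pow_add, ← pow_add, Nat.add_sub_cancel' htN]
  have hga : galpha (Fintype.card F) (finrank F M - finrank F T) m =
      Nat.card {X : Submodule F (M ⧸ T) // finrank F X = m} *
        galpha (Fintype.card F) m m := by
    rw [← hquot]
    exact galpha_eq_card_grassmannian_mul (F := F) (M := M ⧸ T) m
  rw [hprod, hga, ← mul_assoc] at key
  have := Nat.eq_of_mul_eq_mul_right (galpha_pos hq m) key
  rw [this, card_grassmannian (F := F) (M := M ⧸ T) m, hquot]


lemma frk_congr {U V : Submodule F M} (h : U = V) : finrank F ↥U = finrank F ↥V := by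
  rw [h]

lemma card_subspaces_le (Cs : Submodule F M) (k : ℕ) :
    Nat.card {S : Submodule F M // S ≤ Cs ∧ finrank F S = k} =
      gauss (Fintype.card F) (finrank F Cs) k := by
  rw [← card_grassmannian (F := F) (M := ↥Cs) k]
  apply Nat.card_congr
  refine ⟨fun S => ⟨comap Cs.subtype S.1, ?_⟩, fun S' => ⟨map Cs.subtype S'.1,
    map_subtype_le _ _, ?_⟩, ?_, ?_⟩
  · obtain ⟨S, hle, hrk⟩ := S
    have hmap : map Cs.subtype (comap Cs.subtype S) = S := by
      rw [Submodule.map_comap_subtype, inf_of_le_right hle]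
    have heq : finrank F ↥(comap Cs.subtype S) =
        finrank F ↥(map Cs.subtype (comap Cs.subtype S)) :=
      LinearEquiv.finrank_eq
        (Submodule.equivMapOfInjective Cs.subtype (Submodule.injective_subtype Cs) _)
    rw [heq, frk_congr hmap]
    exact hrk
  · obtain ⟨S', hrk⟩ := S'
    have heq : finrank F ↥(map Cs.subtype S') = finrank F ↥S' :=
      (LinearEquiv.finrank_eq
        (Submodule.equivMapOfInjective Cs.subtype (Submodule.injective_subtype Cs) _)).symm
    rw [heq]
    exact hrk
  · rintro ⟨S, hle, hrk⟩
    apply Subtype.ext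
    simp only
    rw [Submodule.map_comap_subtype, inf_of_le_right hle]
  · rintro ⟨S', hrk⟩
    apply Subtype.ext
    simp only
    exact Submodule.comap_map_eq_of_injective (Submodule.injective_subtype Cs) S'

lemma map_inf_of_ker_le {N : Type} [AddCommGroup N] [Module F N] (f : M →ₗ[F] N)
    {U V : Submodule F M} (h : LinearMap.ker f ≤ V) :
    map f U ⊓ map f V = map f (U ⊓ V) := by
  apply le_antisymm
  · rintro x ⟨hx1, hx2⟩
    obtain ⟨u, hu, rfl⟩ := hx1
    obtain ⟨w, hw, hval⟩ := hx2
    have : u - w ∈ LinearMap.ker f := by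
      rw [LinearMap.mem_ker, map_sub, hval, sub_self]
    have huV : u ∈ V := by
      have := add_mem (h this) hw
      simpa using this
    exact ⟨u, ⟨hu, huV⟩, rfl⟩
  · exact le_inf (map_mono inf_le_left) (map_mono inf_le_right)

lemma finrank_map_mkQ_add {S W : Submodule F M} (h : S ≤ W) :
    finrank F (map S.mkQ W) + finrank F S = finrank F W := by
  have h1 := LinearMap.finrank_range_add_finrank_ker (S.mkQ.comp W.subtype)
  rw [LinearMap.range_comp, Submodule.range_subtype, LinearMap.ker_comp,
    Submodule.ker_mkQ] at h1
  rwa [← LinearEquiv.finrank_eq (Submodule.comapSubtypeEquivOfLe h)]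

lemma map_comap_mkQ_self (S : Submodule F M) (V' : Submodule F (M ⧸ S)) :
    map S.mkQ (comap S.mkQ V') = V' := by
  rw [Submodule.map_comap_eq, Submodule.range_mkQ, top_inf_eq]

lemma finrank_comap_mkQ (S : Submodule F M) (V' : Submodule F (M ⧸ S)) :
    finrank F (comap S.mkQ V') = finrank F V' + finrank F S := by
  have hle : S ≤ comap S.mkQ V' := by
    intro x hx
    simp [Submodule.mem_comap, (Submodule.Quotient.mk_eq_zero S).2 hx]
  have := finrank_map_mkQ_add hle
  rw [map_comap_mkQ_self] at this
  omega

lemma map_mkQ_self_eq_bot (S : Submodule F M) : map S.mkQ S = ⊥ := by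
  rw [eq_bot_iff]
  rintro x ⟨s, hs, rfl⟩
  simp [(Submodule.Quotient.mk_eq_zero S).2 hs]

/-- Count of `v`-dimensional subspaces with prescribed intersection with `Cs`. -/
lemma card_fixed_inter (Cs S : Submodule F M) (hS : S ≤ Cs) {v k : ℕ}
    (hk : finrank F S = k) (hkv : k ≤ v) :
    Nat.card {V : Submodule F M // finrank F V = v ∧ Cs ⊓ V = S} =
      Nat.card {V' : Submodule F (M ⧸ S) //
        finrank F V' = v - k ∧ Disjoint V' (map S.mkQ Cs)} := by
  apply Nat.card_congr
  refine ⟨fun V => ⟨map S.mkQ V.1, ?_, ?_⟩, fun V' => ⟨comap S.mkQ V'.1, ?_, ?_⟩, ?_, ?_⟩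
  · -- finrank of image
    obtain ⟨V, hV, hCV⟩ := V
    have hSV : S ≤ V := hCV ▸ inf_le_right
    have := finrank_map_mkQ_add hSV
    simp only
    omega
  · -- disjointness
    obtain ⟨V, hV, hCV⟩ := V
    have hSV : S ≤ V := hCV ▸ inf_le_right
    simp only
    rw [disjoint_iff, inf_comm, map_inf_of_ker_le S.mkQ (by rw [Submodule.ker_mkQ]; exact hSV),
      hCV, map_mkQ_self_eq_bot]
  · -- finrank of preimage
    obtain ⟨V', hV', hd⟩ := V'
    simp only
    rw [finrank_comap_mkQ, hV', hk]
    omega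
  · -- intersection is S
    obtain ⟨V', hV', hd⟩ := V'
    simp only
    have hle : S ≤ Cs ⊓ comap S.mkQ V' := by
      refine le_inf hS ?_
      intro x hx
      simp [Submodule.mem_comap, (Submodule.Quotient.mk_eq_zero S).2 hx]
    apply le_antisymm ?_ hle
    have h1 : map S.mkQ (Cs ⊓ comap S.mkQ V') ≤ map S.mkQ Cs ⊓ V' := by
      refine le_inf (map_mono inf_le_left) ?_
      exact le_trans (map_mono inf_le_right) (Submodule.map_comap_le _ _)
    rw [(disjoint_iff.1 hd.symm)] at h1
    intro x hx
    have hx0 : S.mkQ x ∈ (⊥ : Submodule F (M ⧸ S)) := h1 ⟨x, hx, rfl⟩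
    simp only [Submodule.mem_bot] at hx0
    rwa [← Submodule.ker_mkQ S, LinearMap.mem_ker]
  · rintro ⟨V, hV, hCV⟩
    have hSV : S ≤ V := hCV ▸ inf_le_right
    apply Subtype.ext
    simp only
    rw [Submodule.comap_map_mkQ, sup_eq_right.2 hSV]
  · rintro ⟨V', hV', hd⟩
    apply Subtype.ext
    simp only
    exact map_comap_mkQ_self S V'

/-- The count of `v`-dim subspaces whose intersection with `Cs` has dimension `k`. -/
lemma card_inter_dim (Cs : Submodule F M) {v k : ℕ} (hkv : k ≤ v)
    (hkr : k ≤ finrank F Cs) :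
    Nat.card {V : Submodule F M // finrank F V = v ∧ finrank F ↥(Cs ⊓ V) = k} =
      gauss (Fintype.card F) (finrank F Cs) k *
        (Fintype.card F ^ ((finrank F Cs - k) * (v - k)) *
          gauss (Fintype.card F) (finrank F M - finrank F Cs) (v - k)) := by
  have : Finite M := Module.finite_of_finite F
  have hrN : finrank F Cs ≤ finrank F M := Submodule.finrank_le Cs
  -- the constant fiber count
  have fib : ∀ S : {S : Submodule F M // S ≤ Cs ∧ finrank F S = k},
      Nat.card {V : Submodule F M // finrank F V = v ∧ Cs ⊓ V = S.1} =
        Fintype.card F ^ ((finrank F Cs - k) * (v - k)) *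
          gauss (Fintype.card F) (finrank F M - finrank F Cs) (v - k) := by
    rintro ⟨S, hle, hrk⟩
    rw [card_fixed_inter Cs S hle hrk hkv, card_subspace_avoiding (map S.mkQ Cs) (v - k)]
    have h1 : finrank F (map S.mkQ Cs) = finrank F Cs - k := by
      have := finrank_map_mkQ_add hle
      omega
    have h2 : finrank F (M ⧸ S) = finrank F M - k := by
      have := Submodule.finrank_quotient_add_finrank S
      have := Submodule.finrank_le S
      omega
    rw [h1, h2]
    congr 2
    omega
  -- fibration
  have e : {V : Submodule F M // finrank F V = v ∧ finrank F ↥(Cs ⊓ V) = k} ≃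
      Σ S : {S : Submodule F M // S ≤ Cs ∧ finrank F S = k},
        {V : Submodule F M // finrank F V = v ∧ Cs ⊓ V = S.1} := by
    refine ⟨fun V => ⟨⟨Cs ⊓ V.1, inf_le_left, V.2.2⟩, ⟨V.1, V.2.1, rfl⟩⟩,
      fun p => ⟨p.2.1, p.2.2.1, by rw [p.2.2.2, p.1.2.2]⟩, ?_, ?_⟩
    · rintro ⟨V, hV, hCV⟩
      rfl
    · rintro ⟨⟨S, hle, hrk⟩, ⟨V, hV, hCV⟩⟩
      refine Sigma.ext (Subtype.ext ?_) ?_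
      · simpa using hCV
      · refine (Subtype.heq_iff_coe_eq ?_).2 rfl
        intro W
        simp only
        rw [hCV]
  rw [Nat.card_congr e, card_sigma_const fib, card_subspaces_le]

end Count

section D

variable {F : Type} [Field F] [Fintype F] {n : ℕ}

lemma dS_add (U V : Submodule F (Fin n → F)) :
    finrank F ↥(U ⊔ V) = dS U V + finrank F ↥(U ⊓ V) := by
  have h : finrank F ↥(U ⊓ V) ≤ finrank F ↥(U ⊔ V) :=
    Submodule.finrank_mono (le_trans inf_le_left le_sup_left)
  rw [dS]
  omega

lemma dS_key (U V : Submodule F (Fin n → F)) :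
    2 * finrank F ↥(U ⊓ V) + dS U V = finrank F ↥U + finrank F ↥V := by
  have := Submodule.finrank_sup_add_finrank_inf_eq U V
  have := dS_add U V
  omega

lemma dS_symm (U V : Submodule F (Fin n → F)) : dS U V = dS V U := by
  rw [dS, dS, frk_congr (sup_comm U V), frk_congr (inf_comm U V)]

lemma dS_eq_zero_iff (U V : Submodule F (Fin n → F)) : dS U V = 0 ↔ U = V := by
  constructor
  · intro h
    have h1 := dS_add U V
    rw [h, Nat.zero_add] at h1
    have h2 : U ⊓ V = U ⊔ V :=
      Submodule.eq_of_le_of_finrank_le (le_trans inf_le_left le_sup_left) (le_of_eq h1)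
    have hUle : U ≤ V := le_trans (le_trans le_sup_left (le_of_eq h2.symm)) inf_le_right
    have hVle : V ≤ U := le_trans (le_trans le_sup_right (le_of_eq h2.symm)) inf_le_left
    exact le_antisymm hUle hVle
  · rintro rfl
    rw [dS, frk_congr (sup_idem U), frk_congr (inf_idem U)]
    omega

lemma dS_triangle (U V W : Submodule F (Fin n → F)) :
    dS U W ≤ dS U V + dS V W := by
  have i1 : finrank F ↥(U ⊓ V) + finrank F ↥(V ⊓ W) ≤
      finrank F ↥V + finrank F ↥(U ⊓ W) := by
    have e := Submodule.finrank_sup_add_finrank_inf_eq (U ⊓ V) (V ⊓ W)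
    have m1 : finrank F ↥((U ⊓ V) ⊔ (V ⊓ W)) ≤ finrank F ↥V :=
      Submodule.finrank_mono (sup_le (inf_le_right) (inf_le_left))
    have m2 : finrank F ↥((U ⊓ V) ⊓ (V ⊓ W)) ≤ finrank F ↥(U ⊓ W) :=
      Submodule.finrank_mono (le_inf (le_trans inf_le_left inf_le_left)
        (le_trans inf_le_right inf_le_right))
    omega
  have i2 : finrank F ↥(U ⊔ W) + finrank F ↥V ≤
      finrank F ↥(U ⊔ V) + finrank F ↥(V ⊔ W) := by
    have e := Submodule.finrank_sup_add_finrank_inf_eq (U ⊔ V) (V ⊔ W)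
    have m1 : finrank F ↥(U ⊔ W) ≤ finrank F ↥((U ⊔ V) ⊔ (V ⊔ W)) :=
      Submodule.finrank_mono (sup_le (le_trans le_sup_left le_sup_left)
        (le_trans le_sup_right le_sup_right))
    have m2 : finrank F ↥V ≤ finrank F ↥((U ⊔ V) ⊓ (V ⊔ W)) :=
      Submodule.finrank_mono (le_inf le_sup_right le_sup_left)
    omega
  have a1 := dS_add U V
  have a2 := dS_add V W
  have a3 := dS_add U W
  have k1 := dS_key U V
  have k2 := dS_key V W
  have k3 := dS_key U W
  omega

/-- Structure of subspaces achieving triangle equality. -/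
lemma dS_triangle_eq_structure {U W V : Submodule F (Fin n → F)}
    (h : dS U V + dS W V = dS U W) :
    U ⊓ W ≤ V ∧ (U ⊓ V) ⊔ (W ⊓ V) = V := by
  have hinf : (U ⊓ V) ⊓ (W ⊓ V) = (U ⊓ W) ⊓ V := by
    apply le_antisymm
    · exact le_inf (le_inf (le_trans inf_le_left inf_le_left)
        (le_trans inf_le_right inf_le_left)) (le_trans inf_le_left inf_le_right)
    · exact le_inf (le_inf (le_trans inf_le_left inf_le_left) inf_le_right)
        (le_inf (le_trans inf_le_left inf_le_right) inf_le_right)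
  have e := Submodule.finrank_sup_add_finrank_inf_eq (U ⊓ V) (W ⊓ V)
  rw [frk_congr hinf] at e
  have m1 : finrank F ↥((U ⊓ V) ⊔ (W ⊓ V)) ≤ finrank F ↥V :=
    Submodule.finrank_mono (sup_le inf_le_right inf_le_right)
  have m2 : finrank F ↥((U ⊓ W) ⊓ V) ≤ finrank F ↥(U ⊓ W) :=
    Submodule.finrank_mono inf_le_left
  have k1 := dS_key U V
  have k2 := dS_key W V
  have k3 := dS_key U W
  have hx : finrank F ↥((U ⊓ V) ⊔ (W ⊓ V)) = finrank F ↥V ∧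
      finrank F ↥((U ⊓ W) ⊓ V) = finrank F ↥(U ⊓ W) := by
    constructor <;> omega
  constructor
  · have := Submodule.eq_of_le_of_finrank_le (inf_le_left : (U ⊓ W) ⊓ V ≤ U ⊓ W)
      (le_of_eq hx.2.symm)
    rw [← this]
    exact inf_le_right
  · exact Submodule.eq_of_le_of_finrank_le (sup_le inf_le_right inf_le_right)
      (le_of_eq hx.1.symm)

end D

section E

variable {F : Type} [Field F] [Fintype F] {n : ℕ}

/-- The count of subspaces "between" two codewords at triangle-equality position. -/
lemma card_between (C D : Submodule F (Fin n → F)) {r d v τ : ℕ}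
    (hCr : finrank F ↥C = r) (hDr : finrank F ↥D = r) (hCD : dS C D = 2 * d)
    (hd : 1 ≤ d)
    (hτ : (2 * τ : ℤ) = (d : ℤ) - 1 + v - r) :
    Nat.card {V : Submodule F (Fin n → F) //
        finrank F ↥V = v ∧ dS C V = d + 1 ∧ dS D V = d - 1} =
      gauss (Fintype.card F) d τ * gauss (Fintype.card F) d (τ + 1) := by
  set P := C ⊓ D with hP
  set C' := map P.mkQ C with hC'
  set D' := map P.mkQ D with hD'
  have hPC : P ≤ C := inf_le_left
  have hPD : P ≤ D := inf_le_right
  have hkq : LinearMap.ker P.mkQ = P := Submodule.ker_mkQ P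
  have kCD0 := dS_key C D
  rw [hCD, hCr, hDr] at kCD0
  have kCD : 2 * finrank F ↥P + 2 * d = r + r := kCD0
  have hmc0 : finrank F ↥C' + finrank F ↥P = r := by
    have := finrank_map_mkQ_add hPC
    rw [hCr] at this
    exact this
  have hmd0 : finrank F ↥D' + finrank F ↥P = r := by
    have := finrank_map_mkQ_add hPD
    rw [hDr] at this
    exact this
  have hC'd : finrank F ↥C' = d := by omega
  have hD'd : finrank F ↥D' = d := by omega
  have hC'D' : C' ⊓ D' = ⊥ := by
    rw [hC', hD', map_inf_of_ker_le P.mkQ (by rw [hkq]; exact hPD)]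
    exact map_mkQ_self_eq_bot P
  have hCeq : comap P.mkQ C' = C := by
    rw [hC', Submodule.comap_map_mkQ]
    exact sup_eq_right.2 hPC
  have hDeq : comap P.mkQ D' = D := by
    rw [hD', Submodule.comap_map_mkQ]
    exact sup_eq_right.2 hPD
  -- forward facts
  have fwd : ∀ V : Submodule F (Fin n → F), finrank F ↥V = v → dS C V = d + 1 →
      dS D V = d - 1 →
      (P ≤ V ∧ (C ⊓ V) ⊔ (D ⊓ V) = V) ∧
      (map P.mkQ (C ⊓ V) ≤ C' ∧ finrank F ↥(map P.mkQ (C ⊓ V)) = τ) ∧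
      (map P.mkQ (D ⊓ V) ≤ D' ∧ finrank F ↥(map P.mkQ (D ⊓ V)) = τ + 1) := by
    intro V hV h1 h2
    have htri : dS C V + dS D V = dS C D := by rw [h1, h2, hCD]; omega
    have hstr0 := dS_triangle_eq_structure (U := C) (W := D) (V := V) htri
    have hstr : P ≤ V ∧ (C ⊓ V) ⊔ (D ⊓ V) = V := hstr0
    have kCV := dS_key C V
    rw [h1, hCr, hV] at kCV
    have kDV := dS_key D V
    rw [h2, hDr, hV] at kDV
    have hPCV : P ≤ C ⊓ V := le_inf hPC hstr.1
    have hPDV : P ≤ D ⊓ V := le_inf hPD hstr.1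
    have hmc := finrank_map_mkQ_add hPCV
    have hmd := finrank_map_mkQ_add hPDV
    refine ⟨hstr, ⟨map_mono inf_le_left, by omega⟩, ⟨map_mono inf_le_left, by omega⟩⟩
  -- backward facts
  have bwd : ∀ (A B : Submodule F ((Fin n → F) ⧸ P)), A ≤ C' → finrank F ↥A = τ →
      B ≤ D' → finrank F ↥B = τ + 1 →
      (C ⊓ comap P.mkQ (A ⊔ B) = comap P.mkQ A ∧ D ⊓ comap P.mkQ (A ⊔ B) = comap P.mkQ B) ∧
      (finrank F ↥(comap P.mkQ (A ⊔ B)) = v ∧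
        dS C (comap P.mkQ (A ⊔ B)) = d + 1 ∧ dS D (comap P.mkQ (A ⊔ B)) = d - 1) := by
    intro A B hAC hArk hBD hBrk
    have hAB : A ⊓ B = ⊥ := by
      rw [eq_bot_iff, ← hC'D']
      exact inf_le_inf hAC hBD
    have hABrk := Submodule.finrank_sup_add_finrank_inf_eq A B
    rw [frk_congr hAB, finrank_bot, hArk, hBrk] at hABrk
    have hCi : C ⊓ comap P.mkQ (A ⊔ B) = comap P.mkQ A := by
      rw [← hCeq, ← Submodule.comap_inf]
      congr 1
      have h1 : (A ⊔ B) ⊓ C' = A ⊔ (B ⊓ C') := sup_inf_assoc_of_le B hAC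
      have h2 : B ⊓ C' = ⊥ := by
        rw [eq_bot_iff, ← hC'D']
        exact le_inf (le_trans inf_le_left hBD) inf_le_right |>.trans
          (le_of_eq (inf_comm D' C'))
      rw [inf_comm, h1, h2, sup_bot_eq]
    have hDi : D ⊓ comap P.mkQ (A ⊔ B) = comap P.mkQ B := by
      rw [← hDeq, ← Submodule.comap_inf]
      congr 1
      have h1 : (B ⊔ A) ⊓ D' = B ⊔ (A ⊓ D') := sup_inf_assoc_of_le A hBD
      have h2 : A ⊓ D' = ⊥ := by
        rw [eq_bot_iff, ← hC'D']
        exact le_inf inf_le_left (le_trans inf_le_right le_rfl) |>.trans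
          (le_inf (le_trans inf_le_left hAC) inf_le_right)
      rw [inf_comm, sup_comm A B, h1, h2, sup_bot_eq]
    have hrkAB : finrank F ↥(comap P.mkQ (A ⊔ B)) = v := by
      rw [finrank_comap_mkQ]
      omega
    have hrkA : finrank F ↥(comap P.mkQ A) = τ + finrank F ↥P := by
      rw [finrank_comap_mkQ, hArk]
    have hrkB : finrank F ↥(comap P.mkQ B) = (τ + 1) + finrank F ↥P := by
      rw [finrank_comap_mkQ, hBrk]
    have kC := dS_key C (comap P.mkQ (A ⊔ B))
    rw [hCr, hrkAB, frk_congr hCi, hrkA] at kC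
    have kD := dS_key D (comap P.mkQ (A ⊔ B))
    rw [hDr, hrkAB, frk_congr hDi, hrkB] at kD
    exact ⟨⟨hCi, hDi⟩, hrkAB, by omega, by omega⟩
  -- the equivalence
  have e : {V : Submodule F (Fin n → F) //
        finrank F ↥V = v ∧ dS C V = d + 1 ∧ dS D V = d - 1} ≃
      ({A : Submodule F ((Fin n → F) ⧸ P) // A ≤ C' ∧ finrank F ↥A = τ} ×
        {B : Submodule F ((Fin n → F) ⧸ P) // B ≤ D' ∧ finrank F ↥B = τ + 1}) := by
    refine ⟨fun V => ⟨⟨map P.mkQ (C ⊓ V.1), (fwd V.1 V.2.1 V.2.2.1 V.2.2.2).2.1⟩,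
        ⟨map P.mkQ (D ⊓ V.1), (fwd V.1 V.2.1 V.2.2.1 V.2.2.2).2.2⟩⟩,
      fun p => ⟨comap P.mkQ (p.1.1 ⊔ p.2.1),
        (bwd p.1.1 p.2.1 p.1.2.1 p.1.2.2 p.2.2.1 p.2.2.2).2⟩, ?_, ?_⟩
    · rintro ⟨V, hV, h1, h2⟩
      have hf := (fwd V hV h1 h2).1
      apply Subtype.ext
      simp only
      rw [← Submodule.map_sup, hf.2, Submodule.comap_map_mkQ]
      exact sup_eq_right.2 hf.1
    · rintro ⟨⟨A, hAC, hArk⟩, ⟨B, hBD, hBrk⟩⟩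
      have hb := (bwd A B hAC hArk hBD hBrk).1
      have hA' : map P.mkQ (C ⊓ comap P.mkQ (A ⊔ B)) = A := by
        rw [hb.1, map_comap_mkQ_self]
      have hB' : map P.mkQ (D ⊓ comap P.mkQ (A ⊔ B)) = B := by
        rw [hb.2, map_comap_mkQ_self]
      simp only [Prod.mk.injEq]
      exact ⟨Subtype.ext hA', Subtype.ext hB'⟩
  rw [Nat.card_congr e, Nat.card_prod]
  congr 1
  · rw [← hC'd]
    exact card_subspaces_le C' τ
  · rw [← hD'd]
    exact card_subspaces_le D' (τ + 1)

end E

section FF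

variable {F : Type} [Field F] [Fintype F]

lemma grassmannian_nonempty {M : Type} [AddCommGroup M] [Module F M]
    [FiniteDimensional F M] {t : ℕ} (h : t ≤ finrank F M) :
    ∃ X : Submodule F M, finrank F ↥X = t := by
  let b := Module.finBasis F M
  let g : Fin t → M := fun i => b (Fin.castLE h i)
  have hg : LinearIndependent F g :=
    b.linearIndependent.comp (Fin.castLE h) (Fin.castLE_injective h)
  exact ⟨span F (Set.range g), by rw [finrank_span_eq_card hg, Fintype.card_fin]⟩

lemma gauss_pos (m t : ℕ) (hq : 2 ≤ Fintype.card F) (h : t ≤ m) :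
    0 < gauss (Fintype.card F) m t := by
  have h1 := card_grassmannian (F := F) (M := Fin m → F) t
  rw [Module.finrank_fin_fun] at h1
  rw [← h1]
  have hfin : Finite (Submodule F (Fin m → F)) :=
    Finite.of_injective (fun p => (p : Set (Fin m → F))) SetLike.coe_injective
  have hne : Nonempty {X : Submodule F (Fin m → F) // finrank F ↥X = t} := by
    obtain ⟨X, hX⟩ := grassmannian_nonempty (F := F) (M := Fin m → F) (t := t)
      (by rw [Module.finrank_fin_fun]; exact h)
    exact ⟨⟨X, hX⟩⟩
  exact Nat.card_pos

lemma gauss_symm (m k l : ℕ) (h : k + l = m) :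
    gauss (Fintype.card F) m k = gauss (Fintype.card F) m l := by
  have h1 := card_grassmannian (F := F) (M := Fin m → F) k
  have h2 := card_grassmannian (F := F) (M := Module.Dual F (Fin m → F)) l
  rw [Module.finrank_fin_fun] at h1
  rw [Subspace.dual_finrank_eq, Module.finrank_fin_fun] at h2
  rw [← h1, ← h2]
  apply Nat.card_eq_of_bijective
    (fun X => (⟨(X.1 : Submodule F (Fin m → F)).dualAnnihilator, by
      have := Subspace.finrank_add_finrank_dualCoannihilator_eq (V := Fin m → F)
        X.1.dualAnnihilator
      rw [Subspace.dualAnnihilator_dualCoannihilator_eq, Module.finrank_fin_fun] at this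
      have hX := X.2
      omega⟩ : {W : Submodule F (Module.Dual F (Fin m → F)) // finrank F ↥W = l}))
  constructor
  · rintro ⟨X, hX⟩ ⟨Y, hY⟩ hEq
    have : X.dualAnnihilator = Y.dualAnnihilator := congrArg Subtype.val hEq
    apply Subtype.ext
    have := congrArg Submodule.dualCoannihilator this
    rwa [Subspace.dualAnnihilator_dualCoannihilator_eq,
      Subspace.dualAnnihilator_dualCoannihilator_eq] at this
  · rintro ⟨W, hW⟩
    refine ⟨⟨W.dualCoannihilator, ?_⟩, ?_⟩
    · have := Subspace.finrank_add_finrank_dualCoannihilator_eq (V := Fin m → F) W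
      rw [Module.finrank_fin_fun] at this
      omega
    · apply Subtype.ext
      simp only
      exact Subspace.dualCoannihilator_dualAnnihilator_eq

end FF


theorem stmt19 (F : Type) [Field F] [Fintype F] (n r v d τ : ℕ)
    (𝒞 : Set (Submodule F (Fin n → F)))
    (hdim : ∀ U ∈ 𝒞, Module.finrank F ↥U = r)
    (hmin : sInf {e : ℕ | ∃ U ∈ 𝒞, ∃ V ∈ 𝒞, U ≠ V ∧ dS U V = e} = 2 * d)
    (hnontriv : ∃ U ∈ 𝒞, ∃ V ∈ 𝒞, U ≠ V)
    (C : Submodule F (Fin n → F)) (hC : C ∈ 𝒞)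
    -- `τ = (d-1+v-r)/2`; in particular `d-1+v-r` is even
    (hτ : (2 * τ : ℤ) = (d : ℤ) - 1 + v - r) :
    -- probability that a received subspace `V` of dimension `v` at subspace
    -- distance `d+1` from `C` (all such `V` equiprobable) lies within subspace
    -- distance `d-1` of some codeword other than `C`
    (Nat.card {V : Submodule F (Fin n → F) //
        Module.finrank F ↥V = v ∧ dS C V = d + 1 ∧
          ∃ D ∈ 𝒞, D ≠ C ∧ dS D V ≤ d - 1} : ℚ) /
      (Nat.card {V : Submodule F (Fin n → F) //
        Module.finrank F ↥V = v ∧ dS C V = d + 1} : ℚ) =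
    ((Fintype.card F : ℚ)) ^ (-(((d - τ) * (τ + 1) : ℕ) : ℤ)) *
      ((gauss (Fintype.card F) d τ * gauss (Fintype.card F) d (τ + 1) : ℕ) : ℚ) /
      ((gauss (Fintype.card F) r (d - τ) *
          gauss (Fintype.card F) (n - r) (τ + 1) : ℕ) : ℚ) *
      (Nat.card {D : Submodule F (Fin n → F) // D ∈ 𝒞 ∧ dS D C = 2 * d} : ℚ) := by
  classical
  have hq : 2 ≤ Fintype.card F := Fintype.one_lt_card
  have hSubFin : Finite (Submodule F (Fin n → F)) :=
    Finite.of_injective (fun p => (p : Set (Fin n → F))) SetLike.coe_injective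
  have hCr : finrank F ↥C = r := hdim C hC
  have hrn : r ≤ n := by
    have := Submodule.finrank_le C
    rwa [Module.finrank_fin_fun, hCr] at this
  have hmem : ∃ U ∈ 𝒞, ∃ V ∈ 𝒞, U ≠ V ∧ dS U V = 2 * d := by
    have hne : {e : ℕ | ∃ U ∈ 𝒞, ∃ V ∈ 𝒞, U ≠ V ∧ dS U V = e}.Nonempty := by
      obtain ⟨U, hU, V, hV, hUV⟩ := hnontriv
      exact ⟨dS U V, U, hU, V, hV, hUV, rfl⟩
    have := Nat.sInf_mem hne
    rw [hmin] at this
    exact this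
  have hd : 1 ≤ d := by
    obtain ⟨U, hU, V, hV, hUV, hdS⟩ := hmem
    by_contra h
    exact hUV ((dS_eq_zero_iff U V).1 (by omega))
  have hminle : ∀ U ∈ 𝒞, ∀ V ∈ 𝒞, U ≠ V → 2 * d ≤ dS U V := by
    intro U hU V hV hUV
    rw [← hmin]
    exact Nat.sInf_le ⟨U, hU, V, hV, hUV, rfl⟩
  have huniq : ∀ (V : Submodule F (Fin n → F)),
      ∀ D ∈ 𝒞, dS D V ≤ d - 1 → ∀ D' ∈ 𝒞, dS D' V ≤ d - 1 → D = D' := by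
    intro V D hD hDV D' hD' hD'V
    by_contra hne
    have h1 := hminle D hD D' hD' hne
    have h2 := dS_triangle D V D'
    have h3 := dS_symm V D'
    omega
  have hwit : ∀ (V : Submodule F (Fin n → F)), dS C V = d + 1 →
      ∀ D ∈ 𝒞, D ≠ C → dS D V ≤ d - 1 → dS D C = 2 * d ∧ dS D V = d - 1 := by
    intro V hCV D hD hDC hDV
    have h1 := hminle D hD C hC hDC
    have h2 := dS_triangle D V C
    have h3 := dS_symm V C
    omega
  -- numerator count
  have hNum : Nat.card {V : Submodule F (Fin n → F) //
      Module.finrank F ↥V = v ∧ dS C V = d + 1 ∧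
        ∃ D ∈ 𝒞, D ≠ C ∧ dS D V ≤ d - 1} =
      Nat.card {D : Submodule F (Fin n → F) // D ∈ 𝒞 ∧ dS D C = 2 * d} *
        (gauss (Fintype.card F) d τ * gauss (Fintype.card F) d (τ + 1)) := by
    have hsig : Nat.card (Σ D : {D : Submodule F (Fin n → F) // D ∈ 𝒞 ∧ dS D C = 2 * d},
        {W : Submodule F (Fin n → F) //
          finrank F ↥W = v ∧ dS C W = d + 1 ∧ dS D.1 W = d - 1}) =
        Nat.card {D : Submodule F (Fin n → F) // D ∈ 𝒞 ∧ dS D C = 2 * d} *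
          (gauss (Fintype.card F) d τ * gauss (Fintype.card F) d (τ + 1)) := by
      refine card_sigma_const ?_
      rintro ⟨D, hD, hDC⟩
      exact card_between C D hCr (hdim D hD) (by rw [dS_symm]; exact hDC) hd hτ
    rw [← hsig]
    have hDne : ∀ D : Submodule F (Fin n → F), dS D C = 2 * d → D ≠ C := by
      intro D hDC h
      rw [h, (dS_eq_zero_iff C C).2 rfl] at hDC
      omega
    apply le_antisymm
    · refine Nat.card_le_card_of_injective (fun V =>
        (⟨⟨(V.2.2.2).choose, (V.2.2.2).choose_spec.1,
          (hwit V.1 V.2.2.1 _ (V.2.2.2).choose_spec.1 (V.2.2.2).choose_spec.2.1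
            (V.2.2.2).choose_spec.2.2).1⟩,
          ⟨V.1, V.2.1, V.2.2.1,
          (hwit V.1 V.2.2.1 _ (V.2.2.2).choose_spec.1 (V.2.2.2).choose_spec.2.1
            (V.2.2.2).choose_spec.2.2).2⟩⟩ :
          Σ D : {D : Submodule F (Fin n → F) // D ∈ 𝒞 ∧ dS D C = 2 * d},
          {W : Submodule F (Fin n → F) //
            finrank F ↥W = v ∧ dS C W = d + 1 ∧ dS D.1 W = d - 1})) ?_
      intro V V' hEq
      have hval := congrArg (fun p : (Σ D : {D : Submodule F (Fin n → F) //
          D ∈ 𝒞 ∧ dS D C = 2 * d},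
          {W : Submodule F (Fin n → F) //
            finrank F ↥W = v ∧ dS C W = d + 1 ∧ dS D.1 W = d - 1}) => p.2.1) hEq
      exact Subtype.ext hval
    · refine Nat.card_le_card_of_injective (fun p =>
        (⟨p.2.1, p.2.2.1, p.2.2.2.1,
          ⟨p.1.1, p.1.2.1, hDne p.1.1 p.1.2.2, le_of_eq p.2.2.2.2⟩⟩ :
          {V : Submodule F (Fin n → F) //
            Module.finrank F ↥V = v ∧ dS C V = d + 1 ∧
              ∃ D ∈ 𝒞, D ≠ C ∧ dS D V ≤ d - 1})) ?_
      rintro ⟨⟨D, hD, hDC⟩, ⟨V, h1, h2, h3⟩⟩ ⟨⟨D', hD'2, hDC'⟩, ⟨V', h1', h2', h3'⟩⟩ hEq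
      have hV : V = V' := congrArg Subtype.val hEq
      subst hV
      have hDD : D = D' := huniq V D hD (le_of_eq h3) D' hD'2 (le_of_eq h3')
      subst hDD
      exact Sigma.ext rfl (heq_of_eq (Subtype.ext rfl))
  -- denominator count in the main case
  have hDen : τ ≤ d → d - τ ≤ r → τ + 1 ≤ n - r →
      Nat.card {V : Submodule F (Fin n → F) //
        Module.finrank F ↥V = v ∧ dS C V = d + 1} =
      gauss (Fintype.card F) r (d - τ) *
        (Fintype.card F ^ ((d - τ) * (τ + 1)) *
          gauss (Fintype.card F) (n - r) (τ + 1)) := by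
    intro hτd hdτ hτ1
    have hiff : ∀ V : Submodule F (Fin n → F),
        (finrank F ↥V = v ∧ dS C V = d + 1) ↔
        (finrank F ↥V = v ∧ finrank F ↥(C ⊓ V) = r - (d - τ)) := by
      intro V
      constructor
      · rintro ⟨h1, h2⟩
        have hkey := dS_key C V
        rw [hCr, h1, h2] at hkey
        exact ⟨h1, by omega⟩
      · rintro ⟨h1, h2⟩
        have hkey := dS_key C V
        rw [hCr, h1, h2] at hkey
        exact ⟨h1, by omega⟩
    rw [Nat.card_congr (Equiv.subtypeEquivRight hiff)]
    have hcid := card_inter_dim (F := F) (M := Fin n → F) C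
      (v := v) (k := r - (d - τ)) (by omega) (by rw [hCr]; omega)
    rw [hCr, Module.finrank_fin_fun] at hcid
    have e1 : r - (r - (d - τ)) = d - τ := by omega
    have e2 : v - (r - (d - τ)) = τ + 1 := by omega
    rw [hcid, e1, e2, gauss_symm r (r - (d - τ)) (d - τ) (by omega)]
  -- case analysis
  by_cases hc1 : d < τ
  · have hg0 : gauss (Fintype.card F) d τ = 0 := by
      rw [gauss, galpha_eq_zero hq hc1, Nat.zero_div]
    rw [hNum, hg0]
    simp
  by_cases hc2 : r < d - τ
  · have hemp : ∀ V : Submodule F (Fin n → F),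
        finrank F ↥V = v → dS C V = d + 1 → False := by
      intro V hV hdS
      have hkey := dS_key C V
      rw [hCr, hV, hdS] at hkey
      omega
    haveI h1 : IsEmpty {V : Submodule F (Fin n → F) //
        Module.finrank F ↥V = v ∧ dS C V = d + 1} :=
      ⟨fun V => hemp V.1 V.2.1 V.2.2⟩
    haveI h2 : IsEmpty {V : Submodule F (Fin n → F) //
        Module.finrank F ↥V = v ∧ dS C V = d + 1 ∧
          ∃ D ∈ 𝒞, D ≠ C ∧ dS D V ≤ d - 1} :=
      ⟨fun V => hemp V.1 V.2.1 V.2.2.1⟩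
    have hg0 : gauss (Fintype.card F) r (d - τ) = 0 := by
      rw [gauss, galpha_eq_zero hq hc2, Nat.zero_div]
    rw [Nat.card_of_isEmpty, Nat.card_of_isEmpty, hg0]
    simp
  by_cases hc3 : n - r < τ + 1
  · have hemp : ∀ V : Submodule F (Fin n → F),
        finrank F ↥V = v → dS C V = d + 1 → False := by
      intro V hV hdS
      have hkey := dS_key C V
      have hadd := dS_add C V
      have hsup : finrank F ↥(C ⊔ V) ≤ n := by
        have := Submodule.finrank_le (C ⊔ V)
        rwa [Module.finrank_fin_fun] at this
      rw [hCr, hV, hdS] at hkey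
      rw [hdS] at hadd
      omega
    haveI h1 : IsEmpty {V : Submodule F (Fin n → F) //
        Module.finrank F ↥V = v ∧ dS C V = d + 1} :=
      ⟨fun V => hemp V.1 V.2.1 V.2.2⟩
    haveI h2 : IsEmpty {V : Submodule F (Fin n → F) //
        Module.finrank F ↥V = v ∧ dS C V = d + 1 ∧
          ∃ D ∈ 𝒞, D ≠ C ∧ dS D V ≤ d - 1} :=
      ⟨fun V => hemp V.1 V.2.1 V.2.2.1⟩
    have hg0 : gauss (Fintype.card F) (n - r) (τ + 1) = 0 := by
      rw [gauss, galpha_eq_zero hq hc3, Nat.zero_div]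
    rw [Nat.card_of_isEmpty, Nat.card_of_isEmpty, hg0]
    simp
  -- main case
  push_neg at hc1 hc2 hc3
  rw [hNum, hDen hc1 hc2 hc3]
  have hGr : 0 < gauss (Fintype.card F) r (d - τ) := gauss_pos _ _ hq hc2
  have hGn : 0 < gauss (Fintype.card F) (n - r) (τ + 1) := gauss_pos _ _ hq hc3
  have hq0 : (Fintype.card F : ℚ) ≠ 0 := Nat.cast_ne_zero.2 (by omega)
  have hGr0 : ((gauss (Fintype.card F) r (d - τ) : ℕ) : ℚ) ≠ 0 :=
    Nat.cast_ne_zero.2 (by omega)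
  have hGn0 : ((gauss (Fintype.card F) (n - r) (τ + 1) : ℕ) : ℚ) ≠ 0 :=
    Nat.cast_ne_zero.2 (by omega)
  have hqe0 : ((Fintype.card F : ℚ) ^ ((d - τ) * (τ + 1) : ℕ)) ≠ 0 := pow_ne_zero _ hq0
  rw [zpow_neg, zpow_natCast]
  push_cast
  field_simp
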